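/- Let E be a parameter set, (X, τ, E) a soft topological space, and {(Y_s, τ'_s, E)}_{s ∈ S} a family of soft topological spaces. For each s let C_s = C(X, Y_s) be the set of soft continuous maps X → Y_s, and let D = C(X, Π s, Y_s) be the set of soft continuous maps from X to the soft product (E × (Π s, Y_s) carrying the product soft topology). Define Δ : (Π s, C_s) → D by Δ(F) = (fun x => fun s => F s x) (this is well defined: Δ(F) is soft continuous into the product soft topology). Then the soft mapping (Δ, 1_E), i.e. the map (e, F) ↦ (e, Δ F) : E × (Π s, C_s) → E × D, is a homeomorphism, where E × (Π s, C_s) carries the product soft topology of the pointwise soft topologies on the E × C_s, and E × D carries the pointwise soft topology. -/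

import Mathlib

/-- The product soft topology on `E × (Π s, Y s)`: the initial topology with respect to
the projection soft maps `(e, y) ↦ (e, y s)`. -/
def softProdTop {E S : Type*} {Y : S → Type*}
    (τ : ∀ s, TopologicalSpace (E × Y s)) : TopologicalSpace (E × ∀ s, Y s) :=
  ⨅ s, TopologicalSpace.induced (fun p : E × ∀ s, Y s => (p.1, p.2 s)) (τ s)

/-- The set of soft continuous maps from `(X, τ, E)` to `(Y, τ', E)`. -/
def SoftCont {E X Y : Type*} (τ : TopologicalSpace (E × X)) (τ' : TopologicalSpace (E × Y)) :=
  {f : X → Y // @Continuous _ _ τ τ' (Prod.map id f)}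

/-- The pointwise soft topology on `E × C(X,Y)`. -/
def pointwiseSoftTop {E X Y : Type*} (τ : TopologicalSpace (E × X))
    (τ' : TopologicalSpace (E × Y)) : TopologicalSpace (E × SoftCont τ τ') :=
  ⨅ x : X, TopologicalSpace.induced (fun p : E × SoftCont τ τ' => (p.1, p.2.1 x)) τ'

/-- `Δ` is well defined: for a family of soft continuous maps `F s : X → Y s`, the map
`x ↦ (fun s => F s x)` is soft continuous into the soft product. -/
theorem delta_softCont {E S X : Type*} {Y : S → Type*}
    (τ : TopologicalSpace (E × X)) (τ' : ∀ s, TopologicalSpace (E × Y s))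
    (F : ∀ s, SoftCont τ (τ' s)) :
    @Continuous _ _ τ (softProdTop τ')
      (Prod.map id (fun x => fun s => (F s).1 x)) := by
  refine continuous_iInf_rng.2 fun s => ?_
  rw [continuous_induced_rng]
  exact (F s).2

theorem comp_softCont {E S X : Type*} {Y : S → Type*}
    (τ : TopologicalSpace (E × X)) (τ' : ∀ s, TopologicalSpace (E × Y s))
    (g : SoftCont τ (softProdTop τ')) (s : S) :
    @Continuous _ _ τ (τ' s) (Prod.map id (fun x => g.1 x s)) := by
  have h1 : @Continuous _ _
      (⨅ s' , TopologicalSpace.induced (fun p : E × ∀ s, Y s => (p.1, p.2 s')) (τ' s'))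
      (τ' s) (fun p : E × ∀ s, Y s => (p.1, p.2 s)) :=
    continuous_iInf_dom continuous_induced_dom
  exact @Continuous.comp _ _ _ τ (softProdTop τ') (τ' s) _ _ h1 g.2

/-- `Δ : Π s, C(X, Y s) → C(X, Π s, Y s)`, `Δ(F) = (fun x s => F s x)`, induces a soft
mapping `(Δ, 1_E)` which is a homeomorphism, where `E × (Π s, C(X, Y s))` carries the
product soft topology of the pointwise soft topologies and `E × C(X, Π s, Y s)` carries
the pointwise soft topology. -/
theorem delta_isHomeomorph {E S X : Type*} {Y : S → Type*}
    (τ : TopologicalSpace (E × X)) (τ' : ∀ s, TopologicalSpace (E × Y s)) :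
    @IsHomeomorph (E × ∀ s, SoftCont τ (τ' s)) (E × SoftCont τ (softProdTop τ'))
      (softProdTop (fun s => pointwiseSoftTop τ (τ' s)))
      (pointwiseSoftTop τ (softProdTop τ'))
      (fun p => (p.1, ⟨fun x => fun s => (p.2 s).1 x, delta_softCont τ τ' p.2⟩)) := by
  letI tA : TopologicalSpace (E × ∀ s, SoftCont τ (τ' s)) :=
    ⨅ s, TopologicalSpace.induced
      (fun p : E × ∀ s, SoftCont τ (τ' s) => (p.1, p.2 s)) (pointwiseSoftTop τ (τ' s))
  letI tB : TopologicalSpace (E × SoftCont τ (softProdTop τ')) :=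
    ⨅ x : X, TopologicalSpace.induced
      (fun p : E × SoftCont τ (softProdTop τ') => (p.1, p.2.1 x)) (softProdTop τ')
  have projA : ∀ s, @Continuous _ _ tA (pointwiseSoftTop τ (τ' s))
      (fun p : E × ∀ s, SoftCont τ (τ' s) => (p.1, p.2 s)) :=
    fun s => continuous_iInf_dom continuous_induced_dom
  have projB : ∀ x : X, @Continuous _ _ tB (softProdTop τ')
      (fun p : E × SoftCont τ (softProdTop τ') => (p.1, p.2.1 x)) :=
    fun x => continuous_iInf_dom continuous_induced_dom
  have evC : ∀ (s : S) (x : X), @Continuous _ _ (pointwiseSoftTop τ (τ' s)) (τ' s)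
      (fun p : E × SoftCont τ (τ' s) => (p.1, p.2.1 x)) := by
    intro s x
    show @Continuous _ _
      (⨅ x' : X, TopologicalSpace.induced
        (fun p : E × SoftCont τ (τ' s) => (p.1, p.2.1 x')) (τ' s)) (τ' s) _
    exact continuous_iInf_dom continuous_induced_dom
  have projY : ∀ s, @Continuous _ _ (softProdTop τ') (τ' s)
      (fun p : E × ∀ s, Y s => (p.1, p.2 s)) := by
    intro s
    show @Continuous _ _
      (⨅ s', TopologicalSpace.induced
        (fun p : E × ∀ s, Y s => (p.1, p.2 s')) (τ' s')) (τ' s) _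
    exact continuous_iInf_dom continuous_induced_dom
  rw [isHomeomorph_iff_exists_inverse]
  refine ⟨?_, fun p => (p.1, fun s => ⟨fun x => p.2.1 x s, comp_softCont τ τ' p.2 s⟩),
    fun p => rfl, ?_, ?_⟩
  · -- continuity of Δ
    show @Continuous _ _ tA tB _
    refine continuous_iInf_rng.mpr fun x => continuous_induced_rng.mpr ?_
    show @Continuous _ _ tA
      (⨅ s, TopologicalSpace.induced (fun p : E × ∀ s, Y s => (p.1, p.2 s)) (τ' s))
      (fun p : E × ∀ s, SoftCont τ (τ' s) => (p.1, fun s => (p.2 s).1 x))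
    refine continuous_iInf_rng.mpr fun s => continuous_induced_rng.mpr ?_
    exact @Continuous.comp _ _ _ tA (pointwiseSoftTop τ (τ' s)) (τ' s) _ _ (evC s x) (projA s)
  · rintro ⟨e, g⟩
    simp only [Prod.mk.injEq, true_and]
    exact Prod.ext rfl (Subtype.ext rfl)
  · -- continuity of inverse
    show @Continuous _ _ tB tA _
    refine continuous_iInf_rng.mpr fun s => continuous_induced_rng.mpr ?_
    show @Continuous _ _ tB
      (⨅ x : X, TopologicalSpace.induced
        (fun p : E × SoftCont τ (τ' s) => (p.1, p.2.1 x)) (τ' s))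
      (fun p : E × SoftCont τ (softProdTop τ') =>
        (p.1, ⟨fun x => p.2.1 x s, comp_softCont τ τ' p.2 s⟩))
    refine continuous_iInf_rng.mpr fun x => continuous_induced_rng.mpr ?_
    exact @Continuous.comp _ _ _ tB (softProdTop τ') (τ' s) _ _ (projY s) (projB x)
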